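/- (Per-step fixed-point residual bound with inexact gradients.) Let C ⊆ ℝⁿ be a nonempty closed convex set, let φ : ℝⁿ → ℝ be differentiable with gradient that is L'-Lipschitz with respect to the Euclidean norm (L' > 0), and let η satisfy 0 < η < 1/(2L'). Let p ∈ C, let Φ̂ ∈ ℝⁿ be an arbitrary (inexact) gradient surrogate, and define the inexact update p⁺ = Π_C[p − ηΦ̂], the exact update p̄⁺ = Π_C[p − η∇φ(p)], and the fixed-point residual G(p) = (1/η)(p − p̄⁺). Then ‖G(p)‖² ≤ (2/(η(1 − 2ηL'))) · (φ(p) − φ(p⁺) + (η/2)‖∇φ(p) − Φ̂‖²). -/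

import Mathlib

open RealInnerProductSpace

variable {n : ℕ}

/-- Variational characterization of the projection. -/
lemma proj_inner_le_zero {C : Set (EuclideanSpace ℝ (Fin n))} (hC : Convex ℝ C)
    {u v : EuclideanSpace ℝ (Fin n)} (hv : v ∈ C)
    (h : ∀ z ∈ C, ‖v - u‖ ≤ ‖z - u‖) : ∀ z ∈ C, ⟪u - v, z - v⟫ ≤ 0 := by
  apply (norm_eq_iInf_iff_real_inner_le_zero hC hv).1
  haveI : Nonempty C := ⟨⟨v, hv⟩⟩
  apply le_antisymm
  · exact le_ciInf fun w => by
      rw [norm_sub_rev u v, norm_sub_rev u (w : EuclideanSpace ℝ (Fin n))]; exact h w w.2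
  · have hbdd : BddBelow (Set.range fun w : C => ‖u - (w : EuclideanSpace ℝ (Fin n))‖) := by
      refine ⟨0, ?_⟩; rintro _ ⟨w, rfl⟩; exact norm_nonneg _
    exact ciInf_le hbdd ⟨v, hv⟩

/-- Descent lemma. -/
lemma descent_lemma (φ : EuclideanSpace ℝ (Fin n) → ℝ)
    (φ' : EuclideanSpace ℝ (Fin n) → EuclideanSpace ℝ (Fin n))
    (hdiff : ∀ w, HasGradientAt φ (φ' w) w)
    (L' : ℝ)
    (hLip : ∀ w₁ w₂ : EuclideanSpace ℝ (Fin n), ‖φ' w₁ - φ' w₂‖ ≤ L' * ‖w₁ - w₂‖)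
    (x y : EuclideanSpace ℝ (Fin n)) :
    φ y ≤ φ x + ⟪φ' x, y - x⟫ + L' / 2 * ‖y - x‖ ^ 2 := by
  set d := y - x with hd
  set g : ℝ → ℝ := fun s => φ (x + s • d) - s * ⟪φ' x, d⟫ - L' * s ^ 2 / 2 * ‖d‖ ^ 2 with hg
  have hg' : ∀ s : ℝ, HasDerivAt g
      (⟪φ' (x + s • d), d⟫ - ⟪φ' x, d⟫ - L' * s * ‖d‖ ^ 2) s := by
    intro s
    have hline : HasDerivAt (fun s : ℝ => x + s • d) d s := by
      simpa using ((hasDerivAt_id s).smul_const d).const_add x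
    have hφ : HasDerivAt (fun s : ℝ => φ (x + s • d)) ⟪φ' (x + s • d), d⟫ s := by
      have := ((hdiff (x + s • d)).hasFDerivAt).comp_hasDerivAt s hline
      simpa [InnerProductSpace.toDual_apply_apply, Function.comp_def] using this
    have h2 : HasDerivAt (fun s : ℝ => s * ⟪φ' x, d⟫) ⟪φ' x, d⟫ s := by
      simpa using (hasDerivAt_id s).mul_const ⟪φ' x, d⟫
    have h3 : HasDerivAt (fun s : ℝ => L' * s ^ 2 / 2 * ‖d‖ ^ 2) (L' * s * ‖d‖ ^ 2) s := by
      have : HasDerivAt (fun s : ℝ => s ^ 2) (2 * s) s := by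
        simpa using hasDerivAt_pow 2 s
      have := ((this.const_mul L').div_const 2).mul_const (‖d‖ ^ 2)
      exact this.congr_deriv (by ring)
    exact (hφ.sub h2).sub h3
  have hanti : AntitoneOn g (Set.Icc (0:ℝ) 1) := by
    apply antitoneOn_of_deriv_nonpos (convex_Icc 0 1)
    · exact fun s _ => (hg' s).continuousAt.continuousWithinAt
    · exact fun s _ => (hg' s).differentiableAt.differentiableWithinAt
    · intro s hs
      rw [interior_Icc] at hs
      rw [(hg' s).deriv]
      have h1 : ⟪φ' (x + s • d), d⟫ - ⟪φ' x, d⟫ = ⟪φ' (x + s • d) - φ' x, d⟫ := by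
        rw [inner_sub_left]
      have h2 : ⟪φ' (x + s • d) - φ' x, d⟫ ≤ ‖φ' (x + s • d) - φ' x‖ * ‖d‖ :=
        real_inner_le_norm _ _
      have h3 : ‖φ' (x + s • d) - φ' x‖ ≤ L' * (s * ‖d‖) := by
        have := hLip (x + s • d) x
        simpa [norm_smul, abs_of_pos hs.1, mul_assoc] using this
      have h4 : ‖φ' (x + s • d) - φ' x‖ * ‖d‖ ≤ L' * (s * ‖d‖) * ‖d‖ :=
        mul_le_mul_of_nonneg_right h3 (norm_nonneg _)
      nlinarith [sq_nonneg ‖d‖]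
  have hkey := hanti (Set.left_mem_Icc.2 zero_le_one) (Set.right_mem_Icc.2 zero_le_one)
    zero_le_one
  have h0 : g 0 = φ x := by simp [hg]
  have h1 : g 1 = φ y - ⟪φ' x, d⟫ - L' / 2 * ‖d‖ ^ 2 := by
    have : x + (1:ℝ) • d = y := by rw [one_smul, hd]; abel
    simp only [hg, one_smul, one_pow, one_mul] at this ⊢
    rw [this]; ring
  rw [h0, h1] at hkey
  linarith

set_option maxHeartbeats 1000000 in
/-- Per-step fixed-point residual bound with inexact gradients:
with `p⁺ = Π_C[p − ηΦ̂]`, `p̄⁺ = Π_C[p − η∇φ(p)]` and `G(p) = (1/η)(p − p̄⁺)`,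
for `0 < η < 1/(2L')`,
`‖G(p)‖² ≤ (2/(η(1 − 2ηL'))) (φ(p) − φ(p⁺) + (η/2)‖∇φ(p) − Φ̂‖²)`. -/
theorem fixed_point_residual_bound
    {n : ℕ} (C : Set (EuclideanSpace ℝ (Fin n)))
    (hCne : C.Nonempty) (hCclosed : IsClosed C) (hCconv : Convex ℝ C)
    (φ : EuclideanSpace ℝ (Fin n) → ℝ)
    (φ' : EuclideanSpace ℝ (Fin n) → EuclideanSpace ℝ (Fin n))
    (hdiff : ∀ w, HasGradientAt φ (φ' w) w)
    (L' : ℝ) (hL' : 0 < L')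
    (hLip : ∀ w₁ w₂ : EuclideanSpace ℝ (Fin n), ‖φ' w₁ - φ' w₂‖ ≤ L' * ‖w₁ - w₂‖)
    (η : ℝ) (hη : 0 < η) (hη' : η < 1 / (2 * L'))
    (p Φhat pplus pbar : EuclideanSpace ℝ (Fin n))
    (hpC : p ∈ C)
    (hpplusC : pplus ∈ C)
    (hpplusProj : ∀ z ∈ C, ‖pplus - (p - η • Φhat)‖ ≤ ‖z - (p - η • Φhat)‖)
    (hpbarC : pbar ∈ C)
    (hpbarProj : ∀ z ∈ C, ‖pbar - (p - η • φ' p)‖ ≤ ‖z - (p - η • φ' p)‖) :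
    ‖(1 / η) • (p - pbar)‖ ^ 2
      ≤ (2 / (η * (1 - 2 * η * L')))
        * (φ p - φ pplus + (η / 2) * ‖φ' p - Φhat‖ ^ 2) := by
  have ht2 : 2 * (η * L') < 1 := by
    have := (lt_div_iff₀ (by positivity : (0:ℝ) < 2 * L')).1 hη'
    nlinarith
  set X := ‖p - pbar‖ with hX
  set Y := ‖pbar - pplus‖ with hY
  set E := ‖φ' p - Φhat‖ with hE
  set P := ⟪p - pbar, pbar - pplus⟫ with hP
  set Ag := ⟪φ' p, p - pbar⟫ with hAg
  set Bh := ⟪Φhat, pbar - pplus⟫ with hBh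
  set Be := ⟪φ' p - Φhat, pbar - pplus⟫ with hBe
  -- variational inequality for pbar with z = p
  have e1 : X ^ 2 ≤ η * Ag := by
    have h := proj_inner_le_zero hCconv hpbarC hpbarProj p hpC
    have hrw : p - η • φ' p - pbar = (p - pbar) - η • φ' p := by abel
    rw [hrw, inner_sub_left, real_inner_smul_left, real_inner_self_eq_norm_sq] at h
    linarith [h]
  -- variational inequality for pplus with z = pbar
  have e2 : P + Y ^ 2 ≤ η * Bh := by
    have h := proj_inner_le_zero hCconv hpplusC hpplusProj pbar hpbarC
    have hrw : p - η • Φhat - pplus = ((p - pbar) + (pbar - pplus)) - η • Φhat := by abel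
    rw [hrw, inner_sub_left, inner_add_left, real_inner_smul_left,
      real_inner_self_eq_norm_sq] at h
    linarith [h]
  -- descent lemma
  have e3 : φ pplus ≤ φ p - Ag - (Bh + Be) + L' / 2 * (X ^ 2 + 2 * P + Y ^ 2) := by
    have h := descent_lemma φ φ' hdiff L' hLip p pplus
    have hrw : pplus - p = -((p - pbar) + (pbar - pplus)) := by abel
    have hnorm : ‖pplus - p‖ ^ 2 = X ^ 2 + 2 * P + Y ^ 2 := by
      rw [hrw, norm_neg, norm_add_sq_real]
    have hin : ⟪φ' p, pplus - p⟫ = -(Ag + Bh + Be) := by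
      rw [hrw, inner_neg_right, inner_add_right, hAg, hBh, hBe, inner_sub_left]
      ring
    rw [hnorm, hin] at h
    linarith [h]
  have e4 : -(E * Y) ≤ Be := by
    have := abs_real_inner_le_norm (φ' p - Φhat) (pbar - pplus)
    have := neg_abs_le Be
    linarith
  have e5 : -(X * Y) ≤ P := by
    have := abs_real_inner_le_norm (p - pbar) (pbar - pplus)
    have := neg_abs_le P
    linarith
  have hXn : 0 ≤ X := norm_nonneg _
  have hYn : 0 ≤ Y := norm_nonneg _
  have hEn : 0 ≤ E := norm_nonneg _
  -- key scalar inequality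
  have key : (1 - 2 * η * L') * X ^ 2
      ≤ 2 * η * (φ p - φ pplus) + η ^ 2 * E ^ 2 := by
    have m3 : 2 * η * (Ag + (Bh + Be) - L' / 2 * (X ^ 2 + 2 * P + Y ^ 2))
        ≤ 2 * η * (φ p - φ pplus) :=
      mul_le_mul_of_nonneg_left (by linarith [e3]) (by linarith)
    have m4 : 2 * η * Be ≥ -(η ^ 2 * E ^ 2 + Y ^ 2) := by
      have h1 : 2 * η * -(E * Y) ≤ 2 * η * Be :=
        mul_le_mul_of_nonneg_left e4 (by linarith)
      nlinarith [h1, sq_nonneg (η * E - Y)]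
    have m1 : 2 * (X ^ 2) ≤ 2 * (η * Ag) := by linarith
    have m2 : 2 * (P + Y ^ 2) ≤ 2 * (η * Bh) := by linarith
    have m5 : (2 - 2 * (η * L')) * (-(X * Y)) ≤ (2 - 2 * (η * L')) * P :=
      mul_le_mul_of_nonneg_left e5 (by nlinarith)
    have quad : 0 ≤ (1 - η * L') * (X - Y) ^ 2 + 2 * (η * L') * X ^ 2 := by
      have h1 : 0 ≤ (1 - η * L') := by nlinarith
      have := mul_nonneg h1 (sq_nonneg (X - Y))
      nlinarith [mul_pos hη hL']
    linarith [m3, m4, m1, m2, m5, quad]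
  have hαpos : 0 < η * (1 - 2 * η * L') := by nlinarith
  have hLHS : ‖(1 / η) • (p - pbar)‖ ^ 2 = X ^ 2 / η ^ 2 := by
    rw [norm_smul, Real.norm_eq_abs, abs_of_pos (by positivity : (0:ℝ) < 1 / η)]
    field_simp
    rw [hX]
  rw [hLHS]
  calc X ^ 2 / η ^ 2
      ≤ 2 * (φ p - φ pplus + η / 2 * E ^ 2) / (η * (1 - 2 * η * L')) := by
        rw [div_le_div_iff₀ (by positivity) hαpos]
        have := mul_le_mul_of_nonneg_left key hη.le
        linarith [this]
    _ = (2 / (η * (1 - 2 * η * L'))) * (φ p - φ pplus + (η / 2) * E ^ 2) := by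
        ring
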